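/- For every polynomial function s : ℝ² → ℝ of degree at most 2 and every x ∈ ℝ², s(x) − Σ_{i=1}^{3} s(p_i) ψ_i(x) = −(1/2) Σ_{i=1}^{3} |e_i|² · D²s[t_i, t_i] · ψ_{i−1}(x) ψ_{i+1}(x), where D²s[t_i, t_i] is the (constant) second directional derivative of s along t_i; that is, the error of the linear interpolant of s at the vertices of the triangle is −(1/2) Σ_i (∂²s/∂t_i²) ψ_{i−1} ψ_{i+1} |e_i|². -/

import Mathlib

noncomputable section
open MeasureTheory

namespace PaperStmt

/-- Euclidean dot product on `ℝ²`. -/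
def dotp (v w : ℝ × ℝ) : ℝ := v.1 * w.1 + v.2 * w.2

/-- Euclidean length on `ℝ²`. -/
def len (v : ℝ × ℝ) : ℝ := Real.sqrt (v.1 ^ 2 + v.2 ^ 2)

/-- Cross product (determinant) of two planar vectors. -/
def crossp (v w : ℝ × ℝ) : ℝ := v.1 * w.2 - v.2 * w.1

/-- The vertices `p 0, p 1, p 2` form a nondegenerate triangle listed counterclockwise. -/
def Ccw (p : Fin 3 → ℝ × ℝ) : Prop := 0 < crossp (p 1 - p 0) (p 2 - p 0)

/-- Vector of the edge `e_i` opposite vertex `p i`, oriented counterclockwise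
(from `p (i+1)` to `p (i−1)`). -/
def edgeVec (p : Fin 3 → ℝ × ℝ) (i : Fin 3) : ℝ × ℝ := p (i - 1) - p (i + 1)

/-- Length `|e_i|` of the edge opposite vertex `p i`. -/
def elen (p : Fin 3 → ℝ × ℝ) (i : Fin 3) : ℝ := len (edgeVec p i)

/-- Unit tangent `t_i = (p_{i−1} − p_{i+1})/|e_i|` of edge `e_i`. -/
def tvec (p : Fin 3 → ℝ × ℝ) (i : Fin 3) : ℝ × ℝ := (elen p i)⁻¹ • edgeVec p i

/-- Outward unit normal `n_i` of edge `e_i` (clockwise rotation of the tangent,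
which points outward for a counterclockwise triangle). -/
def nvec (p : Fin 3 → ℝ × ℝ) (i : Fin 3) : ℝ × ℝ := ((tvec p i).2, -(tvec p i).1)

/-- Interior angle `θ_i` of the triangle at the vertex `p i`. -/
def angleAt (p : Fin 3 → ℝ × ℝ) (i : Fin 3) : ℝ :=
  Real.arccos (dotp (p (i + 1) - p i) (p (i - 1) - p i) /
    (len (p (i + 1) - p i) * len (p (i - 1) - p i)))

/-- Outer product `v wᵀ` of two planar (column) vectors, as a `2 × 2` matrix. -/
def outerProd (v w : ℝ × ℝ) : Matrix (Fin 2) (Fin 2) ℝ :=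
  !![v.1 * w.1, v.1 * w.2; v.2 * w.1, v.2 * w.2]

/-- Basis matrices `φ_HHJ^i = −(1/(2 sin θ_{i−1} sin θ_{i+1})) (t_{i−1} t_{i+1}ᵀ + t_{i+1} t_{i−1}ᵀ)`
of the lowest-order Hellan–Herrmann–Johnson element. -/
def phiHHJ (p : Fin 3 → ℝ × ℝ) (i : Fin 3) : Matrix (Fin 2) (Fin 2) ℝ :=
  (-(2 * Real.sin (angleAt p (i - 1)) * Real.sin (angleAt p (i + 1)))⁻¹) •
    (outerProd (tvec p (i - 1)) (tvec p (i + 1)) + outerProd (tvec p (i + 1)) (tvec p (i - 1)))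

/-- The quadratic form `vᵀ τ v` of a `2 × 2` matrix on a planar vector. -/
def qf (τ : Matrix (Fin 2) (Fin 2) ℝ) (v : ℝ × ℝ) : ℝ :=
  v.1 * (τ 0 0 * v.1 + τ 0 1 * v.2) + v.2 * (τ 1 0 * v.1 + τ 1 1 * v.2)

end PaperStmt

namespace PaperStmt

/-- Directional derivative of `f` along `v`. -/
def dderiv (v : ℝ × ℝ) (f : ℝ × ℝ → ℝ) : ℝ × ℝ → ℝ := fun x => fderiv ℝ f x v

/-- Second directional derivative `D²f[u, v]`. -/
def d2 (u v : ℝ × ℝ) (f : ℝ × ℝ → ℝ) : ℝ × ℝ → ℝ := dderiv u (dderiv v f)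

/-- Third directional derivative `D³f[u, v, w]`. -/
def d3 (u v w : ℝ × ℝ) (f : ℝ × ℝ → ℝ) : ℝ × ℝ → ℝ := dderiv u (dderiv v (dderiv w f))

end PaperStmt

namespace PaperStmt

/-- `f : ℝ² → ℝ` is a polynomial function of (total) degree at most `l`. -/
def IsPolyFun (l : ℕ) (f : ℝ × ℝ → ℝ) : Prop :=
  ∃ q : MvPolynomial (Fin 2) ℝ, q.totalDegree ≤ l ∧
    ∀ x : ℝ × ℝ, f x = MvPolynomial.eval ![x.1, x.2] q

end PaperStmt

namespace PaperStmt

/-- `ψ` is the family of barycentric coordinates of the triangle with vertices `p`: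
affine functions with `ψ i (p j) = δ_{ij}`. -/
def IsBarycentric (p : Fin 3 → ℝ × ℝ) (ψ : Fin 3 → ℝ × ℝ → ℝ) : Prop :=
  (∀ i : Fin 3, ∃ a b c : ℝ, ∀ x : ℝ × ℝ, ψ i x = a * x.1 + b * x.2 + c) ∧
  (∀ i j : Fin 3, ψ i (p j) = if i = j then 1 else 0)

end PaperStmt


namespace PaperStmt

open MvPolynomial in
lemma poly2_form (q : MvPolynomial (Fin 2) ℝ) (hq : q.totalDegree ≤ 2) :
    ∃ A B C D E F : ℝ, ∀ u v : ℝ,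
      MvPolynomial.eval ![u, v] q =
        A*(u*u) + B*(u*v) + C*(v*v) + D*u + E*v + F := by
  classical
  set dd : ℕ → ℕ → (Fin 2 →₀ ℕ) := fun a b => Finsupp.single 0 a + Finsupp.single 1 b with hdd
  have hdd0 : ∀ a b, dd a b 0 = a := by intro a b; simp [hdd, Finsupp.single_apply]
  have hdd1 : ∀ a b, dd a b 1 = b := by intro a b; simp [hdd, Finsupp.single_apply]
  have hinj : ∀ a b c e : ℕ, dd a b = dd c e ↔ (a = c ∧ b = e) := by
    intro a b c e
    constructor
    · intro h
      exact ⟨by rw [← hdd0 a b, h, hdd0], by rw [← hdd1 a b, h, hdd1]⟩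
    · rintro ⟨rfl, rfl⟩; rfl
  refine ⟨coeff (dd 2 0) q, coeff (dd 1 1) q, coeff (dd 0 2) q, coeff (dd 1 0) q,
    coeff (dd 0 1) q, coeff (dd 0 0) q, ?_⟩
  intro u v
  set S : Finset (Fin 2 →₀ ℕ) := {dd 0 0, dd 1 0, dd 0 1, dd 2 0, dd 1 1, dd 0 2} with hS
  have hsub : q.support ⊆ S := by
    intro d hd
    have hdeg : d 0 + d 1 ≤ 2 := by
      have h := MvPolynomial.le_totalDegree hd
      have hs : (d.sum fun _ e => e) = d 0 + d 1 := by
        rw [Finsupp.sum_fintype]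
        · exact Fin.sum_univ_two _
        · intro i; rfl
      omega
    have hdeq : d = dd (d 0) (d 1) := by
      ext i
      fin_cases i
      · simp [hdd0]
      · simp [hdd1]
    rw [hdeq]
    have hcases : (d 0 = 0 ∧ d 1 = 0) ∨ (d 0 = 1 ∧ d 1 = 0) ∨ (d 0 = 0 ∧ d 1 = 1) ∨
        (d 0 = 2 ∧ d 1 = 0) ∨ (d 0 = 1 ∧ d 1 = 1) ∨ (d 0 = 0 ∧ d 1 = 2) := by omega
    rcases hcases with ⟨h,h'⟩|⟨h,h'⟩|⟨h,h'⟩|⟨h,h'⟩|⟨h,h'⟩|⟨h,h'⟩ <;> rw [h, h'] <;>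
      simp [hS, Finset.mem_insert]
  rw [MvPolynomial.eval_eq']
  rw [Finset.sum_subset hsub (by
    intro d _ hd
    rw [MvPolynomial.notMem_support_iff.mp hd]
    simp)]
  rw [hS]
  rw [Finset.sum_insert (by simp [Finset.mem_insert, hinj]),
      Finset.sum_insert (by simp [Finset.mem_insert, hinj]),
      Finset.sum_insert (by simp [Finset.mem_insert, hinj]),
      Finset.sum_insert (by simp [Finset.mem_insert, hinj]),
      Finset.sum_insert (by simp [Finset.mem_insert, hinj]),
      Finset.sum_singleton]
  simp only [Fin.prod_univ_two, hdd0, hdd1, Matrix.cons_val_zero, Matrix.cons_val_one,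
    Matrix.head_cons]
  ring

lemma quad_d1 (A B C D E F : ℝ) (v x : ℝ × ℝ) :
    dderiv v (fun y : ℝ × ℝ => A*(y.1*y.1) + B*(y.1*y.2) + C*(y.2*y.2) + D*y.1 + E*y.2 + F) x
      = (2*A*x.1 + B*x.2 + D)*v.1 + (B*x.1 + 2*C*x.2 + E)*v.2 := by
  have h1 : HasFDerivAt (fun y : ℝ × ℝ => y.1) (ContinuousLinearMap.fst ℝ ℝ ℝ) x :=
    hasFDerivAt_fst
  have h2 : HasFDerivAt (fun y : ℝ × ℝ => y.2) (ContinuousLinearMap.snd ℝ ℝ ℝ) x :=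
    hasFDerivAt_snd
  have H := (((((h1.mul h1).const_mul A).add ((h1.mul h2).const_mul B)).add
      ((h2.mul h2).const_mul C)).add (h1.const_mul D)).add (h2.const_mul E) |>.add_const F
  unfold dderiv
  rw [(show HasFDerivAt (fun y : ℝ × ℝ => A*(y.1*y.1) + B*(y.1*y.2) + C*(y.2*y.2) + D*y.1 + E*y.2 + F) _ x from H).fderiv]
  simp [ContinuousLinearMap.add_apply, ContinuousLinearMap.smul_apply]
  ring

lemma affine_d1 (a b c : ℝ) (v x : ℝ × ℝ) :
    dderiv v (fun y : ℝ × ℝ => a*y.1 + b*y.2 + c) x = a*v.1 + b*v.2 := by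
  have h1 : HasFDerivAt (fun y : ℝ × ℝ => y.1) (ContinuousLinearMap.fst ℝ ℝ ℝ) x :=
    hasFDerivAt_fst
  have h2 : HasFDerivAt (fun y : ℝ × ℝ => y.2) (ContinuousLinearMap.snd ℝ ℝ ℝ) x :=
    hasFDerivAt_snd
  have H := ((h1.const_mul a).add (h2.const_mul b)).add_const c
  unfold dderiv
  rw [(show HasFDerivAt (fun y : ℝ × ℝ => a*y.1 + b*y.2 + c) _ x from H).fderiv]
  simp [ContinuousLinearMap.add_apply, ContinuousLinearMap.smul_apply]

lemma quad_d2 (A B C D E F : ℝ) (u v x : ℝ × ℝ) :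
    d2 u v (fun y : ℝ × ℝ => A*(y.1*y.1) + B*(y.1*y.2) + C*(y.2*y.2) + D*y.1 + E*y.2 + F) x
      = (2*A*v.1 + B*v.2)*u.1 + (B*v.1 + 2*C*v.2)*u.2 := by
  unfold d2
  have hh : dderiv v (fun y : ℝ × ℝ => A*(y.1*y.1) + B*(y.1*y.2) + C*(y.2*y.2) + D*y.1 + E*y.2 + F)
      = fun x : ℝ × ℝ => (2*A*v.1 + B*v.2)*x.1 + (B*v.1 + 2*C*v.2)*x.2 + (D*v.1 + E*v.2) := by
    funext y
    rw [quad_d1]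
    ring
  rw [hh, affine_d1]

lemma affine_zero {q0 r0 q1 r1 q2 r2 α β γ : ℝ}
    (hΔ : (q1 - q0) * (r2 - r0) - (r1 - r0) * (q2 - q0) ≠ 0)
    (h0 : α*q0 + β*r0 + γ = 0) (h1 : α*q1 + β*r1 + γ = 0) (h2 : α*q2 + β*r2 + γ = 0) :
    α = 0 ∧ β = 0 ∧ γ = 0 := by
  have hα : α * ((q1 - q0) * (r2 - r0) - (r1 - r0) * (q2 - q0)) = 0 := by
    linear_combination (r1 - r2) * h0 + (r2 - r0) * h1 + (r0 - r1) * h2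
  have hβ : β * ((q1 - q0) * (r2 - r0) - (r1 - r0) * (q2 - q0)) = 0 := by
    linear_combination (q2 - q1) * h0 + (q0 - q2) * h1 + (q1 - q0) * h2
  have ha : α = 0 := by rcases mul_eq_zero.mp hα with h | h; exacts [h, absurd h hΔ]
  have hb : β = 0 := by rcases mul_eq_zero.mp hβ with h | h; exacts [h, absurd h hΔ]
  refine ⟨ha, hb, ?_⟩
  linear_combination h0 - q0 * ha - r0 * hb

end PaperStmt

set_option maxHeartbeats 1600000 in
open PaperStmt in
/-- Error of linear interpolation at the vertices for a quadratic polynomial `s`: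
`s − Σ_i s(p_i) ψ_i = −(1/2) Σ_i |e_i|² (∂²s/∂t_i²) ψ_{i−1} ψ_{i+1}`. -/
theorem quadratic_linear_interp_error
    (p : Fin 3 → ℝ × ℝ) (hp : Ccw p)
    (ψ : Fin 3 → ℝ × ℝ → ℝ) (hψ : IsBarycentric p ψ)
    (s : ℝ × ℝ → ℝ) (hs : IsPolyFun 2 s) :
    ∀ x : ℝ × ℝ,
      s x - ∑ i : Fin 3, s (p i) * ψ i x =
        -(1 / 2) * ∑ i : Fin 3,
          elen p i ^ 2 * d2 (tvec p i) (tvec p i) s x * (ψ (i - 1) x * ψ (i + 1) x) := by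
  intro x
  obtain ⟨qp, hq2, hqe⟩ := hs
  obtain ⟨A, B, C, D, E, F, hform⟩ := poly2_form qp hq2
  have hs_eq : s = fun y : ℝ × ℝ =>
      A*(y.1*y.1) + B*(y.1*y.2) + C*(y.2*y.2) + D*y.1 + E*y.2 + F := by
    funext y
    rw [hqe y]
    exact hform y.1 y.2
  subst hs_eq
  obtain ⟨haff, hval⟩ := hψ
  obtain ⟨a0, b0, c0, hψ0⟩ := haff 0
  obtain ⟨a1, b1, c1, hψ1⟩ := haff 1
  obtain ⟨a2, b2, c2, hψ2⟩ := haff 2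
  unfold Ccw crossp at hp
  simp only [Prod.fst_sub, Prod.snd_sub] at hp
  have hΔ : ((p 1).1 - (p 0).1) * ((p 2).2 - (p 0).2)
      - ((p 1).2 - (p 0).2) * ((p 2).1 - (p 0).1) ≠ 0 := ne_of_gt hp
  have v00 : a0*(p 0).1 + b0*(p 0).2 + c0 = 1 := by
    have h := hval 0 0; rw [hψ0] at h; simpa using h
  have v01 : a0*(p 1).1 + b0*(p 1).2 + c0 = 0 := by
    have h := hval 0 1; rw [hψ0] at h; simpa using h
  have v02 : a0*(p 2).1 + b0*(p 2).2 + c0 = 0 := by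
    have h := hval 0 2; rw [hψ0] at h; simpa using h
  have v10 : a1*(p 0).1 + b1*(p 0).2 + c1 = 0 := by
    have h := hval 1 0; rw [hψ1] at h; simpa using h
  have v11 : a1*(p 1).1 + b1*(p 1).2 + c1 = 1 := by
    have h := hval 1 1; rw [hψ1] at h; simpa using h
  have v12 : a1*(p 2).1 + b1*(p 2).2 + c1 = 0 := by
    have h := hval 1 2; rw [hψ1] at h; simpa using h
  have v20 : a2*(p 0).1 + b2*(p 0).2 + c2 = 0 := by
    have h := hval 2 0; rw [hψ2] at h; simpa using h
  have v21 : a2*(p 1).1 + b2*(p 1).2 + c2 = 0 := by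
    have h := hval 2 1; rw [hψ2] at h; simpa using h
  have v22 : a2*(p 2).1 + b2*(p 2).2 + c2 = 1 := by
    have h := hval 2 2; rw [hψ2] at h; simpa using h
  -- partition of unity
  have e0 : (a0+a1+a2)*(p 0).1 + (b0+b1+b2)*(p 0).2 + (c0+c1+c2-1) = 0 := by
    linear_combination v00 + v10 + v20
  have e1 : (a0+a1+a2)*(p 1).1 + (b0+b1+b2)*(p 1).2 + (c0+c1+c2-1) = 0 := by
    linear_combination v01 + v11 + v21
  have e2 : (a0+a1+a2)*(p 2).1 + (b0+b1+b2)*(p 2).2 + (c0+c1+c2-1) = 0 := by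
    linear_combination v02 + v12 + v22
  obtain ⟨hA1, hB1, hC1⟩ := affine_zero hΔ e0 e1 e2
  have hsum : ψ 0 x + ψ 1 x + ψ 2 x = 1 := by
    rw [hψ0, hψ1, hψ2]
    linear_combination x.1 * hA1 + x.2 * hB1 + hC1
  -- first moment (x-coordinate)
  have f0 : (a0*(p 0).1 + a1*(p 1).1 + a2*(p 2).1 - 1)*(p 0).1
      + (b0*(p 0).1 + b1*(p 1).1 + b2*(p 2).1)*(p 0).2
      + (c0*(p 0).1 + c1*(p 1).1 + c2*(p 2).1) = 0 := by
    linear_combination (p 0).1 * v00 + (p 1).1 * v10 + (p 2).1 * v20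
  have f1 : (a0*(p 0).1 + a1*(p 1).1 + a2*(p 2).1 - 1)*(p 1).1
      + (b0*(p 0).1 + b1*(p 1).1 + b2*(p 2).1)*(p 1).2
      + (c0*(p 0).1 + c1*(p 1).1 + c2*(p 2).1) = 0 := by
    linear_combination (p 0).1 * v01 + (p 1).1 * v11 + (p 2).1 * v21
  have f2 : (a0*(p 0).1 + a1*(p 1).1 + a2*(p 2).1 - 1)*(p 2).1
      + (b0*(p 0).1 + b1*(p 1).1 + b2*(p 2).1)*(p 2).2
      + (c0*(p 0).1 + c1*(p 1).1 + c2*(p 2).1) = 0 := by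
    linear_combination (p 0).1 * v02 + (p 1).1 * v12 + (p 2).1 * v22
  obtain ⟨hA2, hB2, hC2⟩ := affine_zero hΔ f0 f1 f2
  have hx1 : ψ 0 x * (p 0).1 + ψ 1 x * (p 1).1 + ψ 2 x * (p 2).1 = x.1 := by
    rw [hψ0, hψ1, hψ2]
    linear_combination x.1 * hA2 + x.2 * hB2 + hC2
  -- first moment (y-coordinate)
  have g0 : (a0*(p 0).2 + a1*(p 1).2 + a2*(p 2).2)*(p 0).1
      + (b0*(p 0).2 + b1*(p 1).2 + b2*(p 2).2 - 1)*(p 0).2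
      + (c0*(p 0).2 + c1*(p 1).2 + c2*(p 2).2) = 0 := by
    linear_combination (p 0).2 * v00 + (p 1).2 * v10 + (p 2).2 * v20
  have g1 : (a0*(p 0).2 + a1*(p 1).2 + a2*(p 2).2)*(p 1).1
      + (b0*(p 0).2 + b1*(p 1).2 + b2*(p 2).2 - 1)*(p 1).2
      + (c0*(p 0).2 + c1*(p 1).2 + c2*(p 2).2) = 0 := by
    linear_combination (p 0).2 * v01 + (p 1).2 * v11 + (p 2).2 * v21
  have g2 : (a0*(p 0).2 + a1*(p 1).2 + a2*(p 2).2)*(p 2).1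
      + (b0*(p 0).2 + b1*(p 1).2 + b2*(p 2).2 - 1)*(p 2).2
      + (c0*(p 0).2 + c1*(p 1).2 + c2*(p 2).2) = 0 := by
    linear_combination (p 0).2 * v02 + (p 1).2 * v12 + (p 2).2 * v22
  obtain ⟨hA3, hB3, hC3⟩ := affine_zero hΔ g0 g1 g2
  have hx2 : ψ 0 x * (p 0).2 + ψ 1 x * (p 1).2 + ψ 2 x * (p 2).2 = x.2 := by
    rw [hψ0, hψ1, hψ2]
    linear_combination x.1 * hA3 + x.2 * hB3 + hC3
  -- edges are nondegenerate
  have hposall : ∀ i : Fin 3, 0 < (edgeVec p i).1^2 + (edgeVec p i).2^2 := by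
    intro i
    by_contra hcon
    push_neg at hcon
    have h1 : (edgeVec p i).1 = 0 := by
      nlinarith only [hcon, sq_nonneg (edgeVec p i).1, sq_nonneg (edgeVec p i).2]
    have h2 : (edgeVec p i).2 = 0 := by
      nlinarith only [hcon, sq_nonneg (edgeVec p i).1, sq_nonneg (edgeVec p i).2]
    have k1 : (p (i-1)).1 - (p (i+1)).1 = 0 := by
      simpa only [edgeVec, Prod.fst_sub] using h1
    have k2 : (p (i-1)).2 - (p (i+1)).2 = 0 := by
      simpa only [edgeVec, Prod.snd_sub] using h2
    have hp' := hp
    fin_cases i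
    · have k1' : (p 2).1 = (p 1).1 := sub_eq_zero.mp k1
      have k2' : (p 2).2 = (p 1).2 := sub_eq_zero.mp k2
      rw [k1', k2'] at hp'
      have hz : ((p 1).1 - (p 0).1) * ((p 1).2 - (p 0).2)
          - ((p 1).2 - (p 0).2) * ((p 1).1 - (p 0).1) = 0 := by ring
      linarith only [hp', hz]
    · have k1' : (p 0).1 = (p 2).1 := sub_eq_zero.mp k1
      have k2' : (p 0).2 = (p 2).2 := sub_eq_zero.mp k2
      rw [k1', k2'] at hp'
      have hz : ((p 1).1 - (p 2).1) * ((p 2).2 - (p 2).2)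
          - ((p 1).2 - (p 2).2) * ((p 2).1 - (p 2).1) = 0 := by ring
      linarith only [hp', hz]
    · have k1' : (p 1).1 = (p 0).1 := sub_eq_zero.mp k1
      have k2' : (p 1).2 = (p 0).2 := sub_eq_zero.mp k2
      rw [k1', k2'] at hp'
      have hz : ((p 0).1 - (p 0).1) * ((p 2).2 - (p 0).2)
          - ((p 0).2 - (p 0).2) * ((p 2).1 - (p 0).1) = 0 := by ring
      linarith only [hp', hz]
  -- the scaled second derivative along each edge
  have hQ : ∀ i : Fin 3,
      elen p i ^ 2 * d2 (tvec p i) (tvec p i)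
        (fun y : ℝ × ℝ => A*(y.1*y.1) + B*(y.1*y.2) + C*(y.2*y.2) + D*y.1 + E*y.2 + F) x
      = 2*A*((edgeVec p i).1*(edgeVec p i).1) + 2*B*((edgeVec p i).1*(edgeVec p i).2)
        + 2*C*((edgeVec p i).2*(edgeVec p i).2) := by
    intro i
    have hpos := hposall i
    have hLne : elen p i ≠ 0 := by
      unfold elen len
      exact ne_of_gt (Real.sqrt_pos.mpr hpos)
    have hkey : (elen p i)⁻¹ * elen p i = 1 := inv_mul_cancel₀ hLne
    rw [quad_d2]
    rw [show (tvec p i).1 = (elen p i)⁻¹ * (edgeVec p i).1 from rfl,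
        show (tvec p i).2 = (elen p i)⁻¹ * (edgeVec p i).2 from rfl]
    linear_combination (elen p i * (elen p i)⁻¹ + 1) *
      (2*A*((edgeVec p i).1*(edgeVec p i).1) + 2*B*((edgeVec p i).1*(edgeVec p i).2)
        + 2*C*((edgeVec p i).2*(edgeVec p i).2)) * hkey
  simp only [Fin.sum_univ_three]
  rw [hQ 0, hQ 1, hQ 2]
  simp only [edgeVec, show ((0:Fin 3) - 1) = 2 from rfl, show ((0:Fin 3) + 1) = 1 from rfl,
    show ((1:Fin 3) - 1) = 0 from rfl, show ((1:Fin 3) + 1) = 2 from rfl,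
    show ((2:Fin 3) - 1) = 1 from rfl, show ((2:Fin 3) + 1) = 0 from rfl,
    Prod.fst_sub, Prod.snd_sub]
  linear_combination
    ((-1)*D + (-1)*B*x.2 + (-1)*A*x.1 + (-1)*A*((p 2).1) + A*((p 2).1)*(ψ 1 x) + A*((p 2).1)*(ψ 0 x) + (-1)*A*((p 1).1)*(ψ 1 x) + (-1)*A*((p 0).1)*(ψ 0 x)) * hx1
    + ((-1)*E + (-1)*C*x.2 + (-1)*C*((p 2).2) + C*((p 2).2)*(ψ 1 x) + C*((p 2).2)*(ψ 0 x) + (-1)*C*((p 1).2)*(ψ 1 x) + (-1)*C*((p 0).2)*(ψ 0 x) + (-1)*B*((p 2).1) + B*((p 2).1)*(ψ 1 x) + B*((p 2).1)*(ψ 0 x) + (-1)*B*((p 1).1)*(ψ 1 x) + (-1)*B*((p 0).1)*(ψ 0 x)) * hx2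
    + ((-1)*F + C*((p 2).2)*x.2 + (-1)*C*((p 1).2)*((p 2).2)*(ψ 1 x) + C*((p 1).2)*((p 1).2)*(ψ 1 x) + (-1)*C*((p 0).2)*((p 2).2)*(ψ 0 x) + C*((p 0).2)*((p 0).2)*(ψ 0 x) + B*((p 2).1)*x.2 + (-1)*B*((p 1).2)*((p 2).1)*(ψ 1 x) + B*((p 1).1)*((p 1).2)*(ψ 1 x) + (-1)*B*((p 0).2)*((p 2).1)*(ψ 0 x) + B*((p 0).1)*((p 0).2)*(ψ 0 x) + A*((p 2).1)*x.1 + (-1)*A*((p 1).1)*((p 2).1)*(ψ 1 x) + A*((p 1).1)*((p 1).1)*(ψ 1 x) + (-1)*A*((p 0).1)*((p 2).1)*(ψ 0 x) + A*((p 0).1)*((p 0).1)*(ψ 0 x)) * hsum
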